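/- The matrix V satisfies: (i) its entrywise complex conjugate equals τV, i.e. conj(V_{(A,B),i}) = V_{(B,A),i} for all A,B ∈ {1,2}, i ∈ {0,1,2,3}; (ii) V is invertible; and (iii) for every g ∈ M₂(ℂ), every entry of the 4×4 matrix V⁻¹ (g ⊗ conj(g)) V is real, where conj(g) is the entrywise complex conjugate of g and ⊗ is the Kronecker product. -/

import Mathlib

open Matrix Complex

noncomputable section

/-- Kronecker product of `Fin`-indexed matrices, with the standard (lexicographic)
Kronecker ordering of indices. -/
def kron {m n p q : ℕ} (A : Matrix (Fin m) (Fin n) ℂ) (B : Matrix (Fin p) (Fin q) ℂ) :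
    Matrix (Fin (m * p)) (Fin (n * q)) ℂ :=
  Matrix.of fun i j => A i.divNat j.divNat * B i.modNat j.modNat

/-- The matrix `V` with `V_{(A,B),i} = (σ_i)_{AB}`, rows ordered (1,1),(1,2),(2,1),(2,2). -/
def Vmat : Matrix (Fin 4) (Fin 4) ℂ :=
  !![1, 0, 0, 1; 0, 1, -I, 0; 0, 1, I, 0; 1, 0, 0, -1]

/-- The flip matrix τ on ℂ²⊗ℂ² ≅ ℂ⁴ determined by τ(u⊗v) = v⊗u. -/
def tau4 : Matrix (Fin 4) (Fin 4) ℂ :=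
  !![1, 0, 0, 0; 0, 0, 1, 0; 0, 1, 0, 0; 0, 0, 0, 1]

/-- `V` satisfies: (i) `conj V = τ V`; (ii) `V` is invertible; and (iii) all entries of
`V⁻¹ (g ⊗ conj g) V` are real, for every 2×2 complex matrix `g`. -/

def Wmat : Matrix (Fin 4) (Fin 4) ℂ :=
  !![1/2, 0, 0, 1/2; 0, 1/2, 1/2, 0; 0, I/2, -I/2, 0; 1/2, 0, 0, -1/2]

lemma VW : Vmat * Wmat = 1 := by
  ext i j
  fin_cases i <;> fin_cases j <;>
    simp [Vmat, Wmat, Matrix.mul_apply, Fin.sum_univ_four, Matrix.one_apply] <;> ring_nf <;>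
    simp [Complex.ext_iff] <;> norm_num

lemma Vinv : Vmat⁻¹ = Wmat := Matrix.inv_eq_right_inv VW

lemma kron_eq (A B : Matrix (Fin 2) (Fin 2) ℂ) :
    (kron A B : Matrix (Fin 4) (Fin 4) ℂ) =
      !![A 0 0 * B 0 0, A 0 0 * B 0 1, A 0 1 * B 0 0, A 0 1 * B 0 1;
         A 0 0 * B 1 0, A 0 0 * B 1 1, A 0 1 * B 1 0, A 0 1 * B 1 1;
         A 1 0 * B 0 0, A 1 0 * B 0 1, A 1 1 * B 0 0, A 1 1 * B 0 1;
         A 1 0 * B 1 0, A 1 0 * B 1 1, A 1 1 * B 1 0, A 1 1 * B 1 1] := by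
  ext i j
  fin_cases i <;> fin_cases j <;> rfl

set_option maxHeartbeats 1600000 in
theorem Vmat_properties :
    Vmat.map (starRingEnd ℂ) = tau4 * Vmat ∧
    IsUnit Vmat ∧
    ∀ g : Matrix (Fin 2) (Fin 2) ℂ, ∀ i j : Fin 4,
      ((Vmat⁻¹ * (kron g (g.map (starRingEnd ℂ)) : Matrix (Fin 4) (Fin 4) ℂ) * Vmat) i j).im
        = 0 := by
  refine ⟨?_, IsUnit.of_mul_eq_one _ VW, ?_⟩
  · ext i j
    fin_cases i <;> fin_cases j <;>
      simp [Vmat, tau4, Matrix.mul_apply, Fin.sum_univ_four]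
  · intro g i j
    rw [Vinv, kron_eq]
    simp only [Matrix.map_apply]
    fin_cases i <;> fin_cases j <;>
      simp [Wmat, Vmat, Matrix.mul_apply, Fin.sum_univ_four, Complex.ext_iff,
        Complex.add_im, Complex.mul_im, Complex.div_im, Complex.sub_im] <;> ring
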